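/- arXiv:1701.07915 — 4 statements merged into one kernel-verified Lean document; each statement's English description precedes it below -/
import Mathlib

section
/- For non-negative integers m, n: D(m,n) = ∑_{k=0}^{min(m,n)} C(n,k)·C(m+n−k, n), where D is the Delannoy number and C denotes the binomial coefficient. -/
open Finset

/-- The Delannoy numbers. -/
def D : ℕ → ℕ → ℕ
  | 0, _ => 1
  | _ + 1, 0 => 1
  | m + 1, n + 1 => D m (n + 1) + D (m + 1) n + D m n

def f (m n : ℕ) : ℕ := ∑ k ∈ range (n+1), Nat.choose n k * Nat.choose (m+n-k) n

lemma f_zero_left (n : ℕ) : f 0 n = 1 := by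
  unfold f
  rw [Finset.sum_range_succ']
  have : ∀ i ∈ range n, Nat.choose n (i+1) * Nat.choose (0+n-(i+1)) n = 0 := by
    intro i hi
    simp only [mem_range] at hi
    have : 0 + n - (i+1) < n := by omega
    rw [Nat.choose_eq_zero_of_lt this, mul_zero]
  rw [Finset.sum_congr rfl this]
  simp

lemma f_zero_right (m : ℕ) : f m 0 = 1 := by
  simp [f]

lemma f_rec (m n : ℕ) : f (m+1) (n+1) = f m (n+1) + f (m+1) n + f m n := by
  have h1 : f (m+1) (n+1)
      = ∑ k ∈ range (n+2), (Nat.choose (n+1) k * Nat.choose (m+n+1-k) (n+1)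
        + Nat.choose (n+1) k * Nat.choose (m+n+1-k) n) := by
    unfold f
    apply Finset.sum_congr rfl
    intro k hk
    simp only [mem_range] at hk
    have h : m + 1 + (n+1) - k = (m + n + 1 - k) + 1 := by omega
    rw [h, Nat.choose_succ_succ, mul_add, add_comm]
  rw [h1, Finset.sum_add_distrib]
  have h2 : ∑ k ∈ range (n+2), Nat.choose (n+1) k * Nat.choose (m+n+1-k) (n+1)
      = f m (n+1) := by
    unfold f
    apply Finset.sum_congr rfl
    intro k hk
    rfl
  have h3 : ∑ k ∈ range (n+2), Nat.choose (n+1) k * Nat.choose (m+n+1-k) n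
      = f (m+1) n + f m n := by
    rw [Finset.sum_range_succ']
    have e1 : ∀ i ∈ range (n+1), Nat.choose (n+1) (i+1) * Nat.choose (m+n+1-(i+1)) n
        = Nat.choose n i * Nat.choose (m+n-i) n + Nat.choose n (i+1) * Nat.choose (m+n-i) n := by
      intro i hi
      have h : m+n+1-(i+1) = m+n-i := by omega
      rw [h, Nat.choose_succ_succ, add_mul]
    rw [Finset.sum_congr rfl e1, Finset.sum_add_distrib]
    have e2 : ∑ i ∈ range (n+1), Nat.choose n (i+1) * Nat.choose (m+n-i) n
        + Nat.choose (n+1) 0 * Nat.choose (m+n+1-0) n = f (m+1) n := by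
      rw [Nat.choose_zero_right, one_mul]
      unfold f
      rw [Finset.sum_range_succ]
      conv_rhs => rw [Finset.sum_range_succ' _ n]
      have hz : Nat.choose n (n+1) = 0 := Nat.choose_eq_zero_of_lt (by omega)
      rw [hz, zero_mul, add_zero, Nat.choose_zero_right, one_mul]
      congr 1
      · apply Finset.sum_congr rfl
        intro i hi
        congr 2
        omega
      · congr 1
        omega
    have e3 : ∑ i ∈ range (n+1), Nat.choose n i * Nat.choose (m+n-i) n = f m n := rfl
    omega
  omega

lemma D_eq_f : ∀ m n, D m n = f m n
  | 0, n => by rw [D, f_zero_left]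
  | m+1, 0 => by rw [D, f_zero_right]
  | m+1, n+1 => by
      rw [D, D_eq_f m (n+1), D_eq_f (m+1) n, D_eq_f m n, f_rec]

theorem stmt12 (m n : ℕ) :
    D m n = ∑ k ∈ range (min m n + 1), Nat.choose n k * Nat.choose (m + n - k) n := by
  rw [D_eq_f, f]
  symm
  apply Finset.sum_subset
  · intro x hx
    simp only [mem_range] at hx ⊢
    omega
  · intro x hx hx'
    simp only [mem_range] at hx hx'
    have h1 : m + n - x < n := by omega
    rw [Nat.choose_eq_zero_of_lt h1, mul_zero]
end

section
/- For non-negative integers m, n: D(m,n) = ∑_{k=0}^{min(m,n)} 2^k · C(m,k) · C(n,k), where D is the Delannoy number and C the binomial coefficient. -/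
open Finset

private def g (m n : ℕ) : ℕ := ∑ k ∈ range (n + 1), 2 ^ k * m.choose k * n.choose k

private lemma g_zero_left (n : ℕ) : g 0 n = 1 := by
  unfold g
  rw [Finset.sum_range_succ']
  simp [Nat.choose_eq_zero_iff]

private lemma g_zero_right (m : ℕ) : g m 0 = 1 := by
  simp [g]

private lemma g_rec (m n : ℕ) :
    g (m + 1) (n + 1) = g m (n + 1) + g (m + 1) n + g m n := by
  have hL : g (m + 1) (n + 1) =
      (∑ k ∈ range (n + 1),
        2 ^ (k + 1) * (m + 1).choose (k + 1) * (n + 1).choose (k + 1)) + 1 := by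
    unfold g; rw [Finset.sum_range_succ']; simp
  have ha : g m (n + 1) =
      (∑ k ∈ range (n + 1),
        2 ^ (k + 1) * m.choose (k + 1) * (n + 1).choose (k + 1)) + 1 := by
    unfold g; rw [Finset.sum_range_succ']; simp
  have hb : g (m + 1) n =
      (∑ k ∈ range (n + 1),
        2 ^ (k + 1) * (m + 1).choose (k + 1) * n.choose (k + 1)) + 1 := by
    unfold g
    rw [Finset.sum_range_succ' (fun k => 2 ^ k * (m + 1).choose k * n.choose k) n]
    rw [Finset.sum_range_succ (fun k => 2 ^ (k + 1) * (m + 1).choose (k + 1) * n.choose (k + 1)) n]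
    simp [Nat.choose_succ_self]
  have hd : g m n =
      (∑ k ∈ range (n + 1),
        2 ^ (k + 1) * m.choose (k + 1) * n.choose (k + 1)) + 1 := by
    unfold g
    rw [Finset.sum_range_succ' (fun k => 2 ^ k * m.choose k * n.choose k) n]
    rw [Finset.sum_range_succ (fun k => 2 ^ (k + 1) * m.choose (k + 1) * n.choose (k + 1)) n]
    simp [Nat.choose_succ_self]
  have hc : g m n = ∑ k ∈ range (n + 1), 2 ^ k * m.choose k * n.choose k := rfl
  have hsum :
      (∑ k ∈ range (n + 1),
        2 ^ (k + 1) * (m + 1).choose (k + 1) * (n + 1).choose (k + 1)) +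
      (∑ k ∈ range (n + 1), 2 ^ (k + 1) * m.choose (k + 1) * n.choose (k + 1)) =
      (∑ k ∈ range (n + 1), 2 ^ (k + 1) * m.choose (k + 1) * (n + 1).choose (k + 1)) +
      (∑ k ∈ range (n + 1), 2 ^ (k + 1) * (m + 1).choose (k + 1) * n.choose (k + 1)) +
      ((∑ k ∈ range (n + 1), 2 ^ k * m.choose k * n.choose k) +
       (∑ k ∈ range (n + 1), 2 ^ k * m.choose k * n.choose k)) := by
    rw [← Finset.sum_add_distrib, ← Finset.sum_add_distrib, ← Finset.sum_add_distrib,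
      ← Finset.sum_add_distrib]
    apply Finset.sum_congr rfl
    intro k _
    rw [Nat.choose_succ_succ m k, Nat.choose_succ_succ n k]
    ring
  omega

private lemma D_eq_g (m : ℕ) : ∀ n, D m n = g m n := by
  induction m with
  | zero => intro n; rw [g_zero_left, D]
  | succ m ihm =>
    intro n
    induction n with
    | zero => rw [g_zero_right, D]
    | succ n ihn =>
      rw [D, ihm, ihn, ihm, g_rec]

theorem stmt13 (m n : ℕ) :
    D m n = ∑ k ∈ range (min m n + 1), 2 ^ k * Nat.choose m k * Nat.choose n k := by
  rw [D_eq_g]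
  unfold g
  symm
  apply Finset.sum_subset
  · intro k hk
    simp only [mem_range] at *
    omega
  · intro k hk hk'
    simp only [mem_range] at *
    have : m < k ∨ n < k := by omega
    rcases this with h | h
    · rw [Nat.choose_eq_zero_of_lt h]; ring
    · rw [Nat.choose_eq_zero_of_lt h]; ring
end

section
/- For all integers n > k > 0, the Delannoy numbers satisfy the log-concavity inequalities D(n,k)^2 ≥ D(n+1, k−1)·D(n−1, k+1) and D(n,k)^2 ≥ D(n, k−1)·D(n, k+1). -/
open Finset

lemma D_rec (m n : ℕ) : D (m + 1) (n + 1) = D m (n + 1) + D (m + 1) n + D m n := by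
  simp [D]

lemma D_zero_left (n : ℕ) : D 0 n = 1 := by simp [D]

lemma D_zero_right (m : ℕ) : D m 0 = 1 := by cases m <;> simp [D]

lemma D_pos (m : ℕ) : ∀ n, 0 < D m n := by
  induction m with
  | zero => intro n; simp [D_zero_left]
  | succ m ihm =>
    intro n
    induction n with
    | zero => simp [D_zero_right]
    | succ n ihn =>
      rw [D_rec]
      have := ihm (n + 1)
      omega

lemma D_col1 (n : ℕ) : D (n + 1) 1 = D n 1 + 2 := by
  have h := D_rec n 0
  simp only [Nat.zero_add, D_zero_right] at h
  omega

lemma D_row1 (n : ℕ) : D 1 (n + 1) = D 1 n + 2 := by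
  have h := D_rec 0 n
  simp only [Nat.zero_add, D_zero_left] at h
  omega

lemma D_col1_mono (n : ℕ) : D n 1 ≤ D (n + 1) 1 := by rw [D_col1]; omega

lemma D_row1_mono (n : ℕ) : D 1 n ≤ D 1 (n + 1) := by rw [D_row1]; omega

-- Arithmetic step lemmas (certificates for the induction).
lemma Rstep (p0 p1 p2 a0 a1 a2 : ℕ) (ea1 : a1 = p1 + a0 + p0) (ea2 : a2 = p2 + a1 + p1)
    (hM : a0 * p2 ≤ a1 * p1) (hT : p1 * a0 ≤ p0 * a1) : a0 * a2 ≤ a1 ^ 2 := by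
  subst ea2; subst ea1; nlinarith [hM, hT]

lemma Ystep (p0 p1 ad bd a0 a1 b0 : ℕ) (ea1 : a1 = p1 + a0 + p0) (eb0 : b0 = a0 + bd + ad)
    (hX : bd * p1 ≤ a0 ^ 2) (hM : ad * p1 ≤ a0 * p0) : b0 * p1 ≤ a1 * a0 := by
  subst ea1; subst eb0; nlinarith [hX, hM]

lemma Xstep (p1 p2 a0 a1 a2 b0 b1 : ℕ) (ea2 : a2 = p2 + a1 + p1) (eb1 : b1 = a1 + b0 + a0)
    (ha1 : 0 < a1) (hp2 : 0 < p2) (hT : a1 * b0 ≤ a0 * b1) (hR : a0 * a2 ≤ a1 ^ 2)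
    (hM : a0 * p2 ≤ a1 * p1) : b0 * p2 ≤ a1 ^ 2 := by
  subst ea2; subst eb1
  by_contra hcon
  push_neg at hcon
  have h6 : a1 * a1 < a1 * (p2 + a1 + p1) := by nlinarith
  nlinarith [mul_le_mul_right hT ((p2 + a1 + p1) * p2),
    mul_le_mul_right hR ((a1 + b0 + a0) * p2),
    mul_le_mul_right hM (a1 ^ 2), hcon, h6]

lemma Mstep (p1 p2 a0 a1 a2 b0 b1 : ℕ) (ea2 : a2 = p2 + a1 + p1) (eb1 : b1 = a1 + b0 + a0)
    (hX : b0 * p2 ≤ a1 ^ 2) (hY : b0 * p1 ≤ a1 * a0) : b0 * a2 ≤ b1 * a1 := by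
  subst ea2; subst eb1; nlinarith [hX, hY]

lemma Tstep (a0 a1 a2 b0 b1 b2 : ℕ) (eb1 : b1 = a1 + b0 + a0) (eb2 : b2 = a2 + b1 + a1)
    (hM : b0 * a2 ≤ b1 * a1) (hR : a0 * a2 ≤ a1 ^ 2) : a2 * b1 ≤ a1 * b2 := by
  subst eb2; subst eb1; nlinarith [hM, hR]

/-- Bundle of five log-concavity-type inequalities for the Delannoy numbers,
proved by strong induction on `m + j`. -/
lemma bundle : ∀ s : ℕ, ∀ m j : ℕ, m + j = s →
    (D (m+1) j * D (m+1) (j+2) ≤ D (m+1) (j+1) ^ 2) ∧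
    (D (m+2) j * D m (j+1) ≤ D (m+1) (j+1) * D (m+1) j) ∧
    (D (m+2) j * D m (j+2) ≤ D (m+1) (j+1) ^ 2) ∧
    (D (m+2) j * D (m+1) (j+2) ≤ D (m+2) (j+1) * D (m+1) (j+1)) ∧
    (D (m+1) (j+2) * D (m+2) (j+1) ≤ D (m+1) (j+1) * D (m+2) (j+2)) := by
  intro s
  induction s using Nat.strong_induction_on with
  | _ s ih =>
  intro m j hs
  -- recurrence facts
  have ea1 : D (m+1) (j+1) = D m (j+1) + D (m+1) j + D m j := D_rec m j
  have ea2 : D (m+1) (j+2) = D m (j+2) + D (m+1) (j+1) + D m (j+1) := D_rec m (j+1)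
  have eb1 : D (m+2) (j+1) = D (m+1) (j+1) + D (m+2) j + D (m+1) j := D_rec (m+1) j
  have eb2 : D (m+2) (j+2) = D (m+1) (j+2) + D (m+2) (j+1) + D (m+1) (j+1) := D_rec (m+1) (j+1)
  -- hM1 : M(m, j+1)
  have hM1 : D (m+1) j * D m (j+2) ≤ D (m+1) (j+1) * D m (j+1) := by
    rcases m with _ | M
    · simpa [D_zero_left] using D_row1_mono j
    · exact (ih (M + j) (by omega) M j rfl).2.2.2.1
  -- hT1 : T(m, j)
  have hT1 : D m (j+1) * D (m+1) j ≤ D m j * D (m+1) (j+1) := by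
    rcases m with _ | M
    · simpa [D_zero_left] using D_row1_mono j
    · rcases j with _ | J
      · simpa [D_zero_right] using D_col1_mono (M+1)
      · exact (ih (M + J) (by omega) M J rfl).2.2.2.2
  -- R : row log-concavity
  have hR : D (m+1) j * D (m+1) (j+2) ≤ D (m+1) (j+1) ^ 2 :=
    Rstep (D m j) (D m (j+1)) (D m (j+2)) (D (m+1) j) (D (m+1) (j+1)) (D (m+1) (j+2))
      ea1 ea2 hM1 (by linarith [hT1])
  -- Y
  have hY : D (m+2) j * D m (j+1) ≤ D (m+1) (j+1) * D (m+1) j := by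
    rcases j with _ | J
    · simpa [D_zero_right] using D_col1_mono m
    · have eb0 : D (m+2) (J+1) = D (m+1) (J+1) + D (m+2) J + D (m+1) J := D_rec (m+1) J
      have ea1' : D (m+1) (J+2) = D m (J+2) + D (m+1) (J+1) + D m (J+1) := D_rec m (J+1)
      have hX' : D (m+2) J * D m (J+2) ≤ D (m+1) (J+1) ^ 2 :=
        (ih (m + J) (by omega) m J rfl).2.2.1
      have hM' : D (m+1) J * D m (J+2) ≤ D (m+1) (J+1) * D m (J+1) := by
        rcases m with _ | M
        · simpa [D_zero_left] using D_row1_mono J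
        · exact (ih (M + J) (by omega) M J rfl).2.2.2.1
      exact Ystep (D m (J+1)) (D m (J+2)) (D (m+1) J) (D (m+2) J)
        (D (m+1) (J+1)) (D (m+1) (J+2)) (D (m+2) (J+1))
        ea1' eb0 hX' (by linarith [hM'])
  -- X
  have hX : D (m+2) j * D m (j+2) ≤ D (m+1) (j+1) ^ 2 := by
    have hT : D (m+1) (j+1) * D (m+2) j ≤ D (m+1) j * D (m+2) (j+1) := by
      rcases j with _ | J
      · simpa [D_zero_right] using D_col1_mono (m+1)
      · exact (ih (m + J) (by omega) m J rfl).2.2.2.2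
    exact Xstep (D m (j+1)) (D m (j+2)) (D (m+1) j) (D (m+1) (j+1)) (D (m+1) (j+2))
      (D (m+2) j) (D (m+2) (j+1)) ea2 eb1 (D_pos (m+1) (j+1)) (D_pos m (j+2)) hT hR hM1
  -- M
  have hM : D (m+2) j * D (m+1) (j+2) ≤ D (m+2) (j+1) * D (m+1) (j+1) :=
    Mstep (D m (j+1)) (D m (j+2)) (D (m+1) j) (D (m+1) (j+1)) (D (m+1) (j+2))
      (D (m+2) j) (D (m+2) (j+1)) ea2 eb1 hX hY
  -- T
  have hT : D (m+1) (j+2) * D (m+2) (j+1) ≤ D (m+1) (j+1) * D (m+2) (j+2) :=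
    Tstep (D (m+1) j) (D (m+1) (j+1)) (D (m+1) (j+2)) (D (m+2) j) (D (m+2) (j+1))
      (D (m+2) (j+2)) eb1 eb2 hM hR
  exact ⟨hR, hY, hX, hM, hT⟩

theorem stmt17 (n k : ℕ) (hk : 0 < k) (hn : k < n) :
    D (n + 1) (k - 1) * D (n - 1) (k + 1) ≤ D n k ^ 2 ∧
      D n (k - 1) * D n (k + 1) ≤ D n k ^ 2 := by
  obtain ⟨j, rfl⟩ : ∃ j, k = j + 1 := ⟨k - 1, by omega⟩
  obtain ⟨m, rfl⟩ : ∃ m, n = m + 1 := ⟨n - 1, by omega⟩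
  have h := bundle (m + j) m j rfl
  simp only [Nat.add_sub_cancel]
  exact ⟨h.2.2.1, h.1⟩
end

section
/- For positive integers m and h with m ≥ h and n ≥ h > 0: D(m+n, h) = ∑_{k=0}^{h} ( D(n−k, k)·D(m+k, h−k) + D(n−k−1, k)·D(m+k, h−k−1) ), where terms with negative arguments are interpreted as 0 and D denotes the Delannoy numbers. -/
open Finset

/-- Delannoy numbers with integer arguments, equal to 0 when an argument is negative. -/
def Dz (a b : ℤ) : ℤ := if a < 0 ∨ b < 0 then 0 else D a.toNat b.toNat

lemma Dz_neg_left {a b : ℤ} (h : a < 0) : Dz a b = 0 := by simp [Dz, h]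

lemma Dz_neg_right {a b : ℤ} (h : b < 0) : Dz a b = 0 := by simp [Dz, h]

lemma Dz_eq (a b : ℤ) (ha : 0 ≤ a) (hb : 0 ≤ b) : Dz a b = D a.toNat b.toNat := by
  rw [Dz, if_neg (by omega)]

lemma Dz_rec (a b : ℤ) (hab : 1 ≤ a ∨ 1 ≤ b) :
    Dz a b = Dz (a-1) b + Dz a (b-1) + Dz (a-1) (b-1) := by
  rcases lt_or_ge b 0 with hb | hb
  · have z1 : Dz a b = 0 := Dz_neg_right hb
    have z2 : Dz (a-1) b = 0 := Dz_neg_right hb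
    have z3 : Dz a (b-1) = 0 := Dz_neg_right (by omega)
    have z4 : Dz (a-1) (b-1) = 0 := Dz_neg_right (by omega)
    rw [z1, z2, z3, z4]; ring
  rcases lt_or_ge a 0 with ha | ha
  · have z1 : Dz a b = 0 := Dz_neg_left ha
    have z2 : Dz (a-1) b = 0 := Dz_neg_left (by omega)
    have z3 : Dz a (b-1) = 0 := Dz_neg_left ha
    have z4 : Dz (a-1) (b-1) = 0 := Dz_neg_left (by omega)
    rw [z1, z2, z3, z4]; ring
  rcases lt_or_ge a 1 with ha1 | ha1
  · -- a = 0, so 1 ≤ b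
    have ea : a = 0 := by omega
    have hb1 : 1 ≤ b := by omega
    subst ea
    have z2 : Dz ((0:ℤ)-1) b = 0 := Dz_neg_left (by norm_num)
    have z4 : Dz ((0:ℤ)-1) (b-1) = 0 := Dz_neg_left (by norm_num)
    have e1 : Dz 0 b = 1 := by rw [Dz_eq 0 b le_rfl hb]; simp [D_zero_left]
    have e3 : Dz 0 (b-1) = 1 := by
      rw [Dz_eq 0 (b-1) le_rfl (by omega)]; simp [D_zero_left]
    rw [z2, z4, e1, e3]; ring
  rcases lt_or_ge b 1 with hb1 | hb1
  · -- b = 0, 1 ≤ a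
    have eb : b = 0 := by omega
    subst eb
    have z3 : Dz a ((0:ℤ)-1) = 0 := Dz_neg_right (by norm_num)
    have z4 : Dz (a-1) ((0:ℤ)-1) = 0 := Dz_neg_right (by norm_num)
    have e1 : Dz a 0 = 1 := by rw [Dz_eq a 0 ha le_rfl]; simp [D_zero_right]
    have e2 : Dz (a-1) 0 = 1 := by rw [Dz_eq (a-1) 0 (by omega) le_rfl]; simp [D_zero_right]
    rw [z3, z4, e1, e2]; ring
  · -- 1 ≤ a, 1 ≤ b
    obtain ⟨x, rfl⟩ : ∃ x : ℕ, a = (x : ℤ) + 1 := ⟨(a-1).toNat, by omega⟩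
    obtain ⟨y, rfl⟩ : ∃ y : ℕ, b = (y : ℤ) + 1 := ⟨(b-1).toNat, by omega⟩
    rw [Dz_eq _ _ (by omega) (by omega), Dz_eq _ _ (by omega) (by omega),
      Dz_eq _ _ (by omega) (by omega), Dz_eq _ _ (by omega) (by omega)]
    have t1 : ((x : ℤ) + 1).toNat = x + 1 := by omega
    have t2 : ((y : ℤ) + 1).toNat = y + 1 := by omega
    have t3 : ((x : ℤ) + 1 - 1).toNat = x := by omega
    have t4 : ((y : ℤ) + 1 - 1).toNat = y := by omega
    rw [t1, t2, t3, t4, show D (x+1) (y+1) = D x (y+1) + D (x+1) y + D x y from by simp [D]]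
    push_cast; ring

def S (m n h : ℕ) : ℤ := ∑ k ∈ range (h + 1),
      (Dz ((n : ℤ) - k) k * Dz ((m : ℤ) + k) ((h : ℤ) - k) +
        Dz ((n : ℤ) - k - 1) k * Dz ((m : ℤ) + k) ((h : ℤ) - k - 1))

lemma Dz_natCast (u v : ℕ) : Dz (u : ℤ) (v : ℤ) = D u v := by
  rw [Dz_eq _ _ (by omega) (by omega)]
  simp

lemma S_zero (m h : ℕ) : S m 0 h = D m h := by
  rw [S, Finset.sum_eq_single_of_mem 0 (by simp)]
  · push_cast
    have z1 : Dz (-1:ℤ) 0 = 0 := Dz_neg_left (by norm_num)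
    have e1 : Dz (0:ℤ) 0 = 1 := by norm_num [Dz, D]
    have e2 : Dz ((m:ℤ) + 0) ((h:ℤ) - 0) = D m h := by
      rw [show (m:ℤ) + 0 = ((m:ℕ):ℤ) from by norm_num,
        show (h:ℤ) - 0 = ((h:ℕ):ℤ) from by norm_num, Dz_natCast]
    rw [z1, e1, e2]; ring
  · intro k hk hk0
    have z1 : Dz (((0:ℕ):ℤ) - k) k = 0 := Dz_neg_left (by omega)
    have z2 : Dz (((0:ℕ):ℤ) - k - 1) k = 0 := Dz_neg_left (by omega)
    rw [z1, z2]; ring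

lemma S_shift (m n h : ℕ) : S (m+1) n h = S m (n+1) h := by
  have L : S (m+1) n h =
      (∑ k ∈ range (h+1), (Dz ((n:ℤ)-k) k + Dz ((n:ℤ)-k-1) k) * Dz ((m:ℤ)+1+k) ((h:ℤ)-k-1))
      + ∑ k ∈ range (h+1), (Dz ((n:ℤ)-k) k * Dz ((m:ℤ)+k) ((h:ℤ)-k)
          + Dz ((n:ℤ)-k) k * Dz ((m:ℤ)+k) ((h:ℤ)-k-1)) := by
    rw [S, ← Finset.sum_add_distrib]
    apply Finset.sum_congr rfl
    intro k _
    have e1 : Dz ((m:ℤ)+1+k) ((h:ℤ)-k) =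
        Dz ((m:ℤ)+k) ((h:ℤ)-k) + Dz ((m:ℤ)+1+k) ((h:ℤ)-k-1) + Dz ((m:ℤ)+k) ((h:ℤ)-k-1) := by
      have t := Dz_rec ((m:ℤ)+1+k) ((h:ℤ)-k) (Or.inl (by omega))
      rw [show (m:ℤ)+1+(k:ℤ)-1 = (m:ℤ)+k from by ring] at t
      exact t
    push_cast
    linear_combination (Dz ((n:ℤ)-k) k) * e1
  have R : S m (n+1) h =
      (∑ k ∈ range (h+1), (Dz ((n:ℤ)+1-k) ((k:ℤ)-1) + Dz ((n:ℤ)-k) ((k:ℤ)-1)) * Dz ((m:ℤ)+k) ((h:ℤ)-k))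
      + ∑ k ∈ range (h+1), (Dz ((n:ℤ)-k) k * Dz ((m:ℤ)+k) ((h:ℤ)-k)
          + Dz ((n:ℤ)-k) k * Dz ((m:ℤ)+k) ((h:ℤ)-k-1)) := by
    rw [S, ← Finset.sum_add_distrib]
    apply Finset.sum_congr rfl
    intro k _
    have e2 : Dz ((n:ℤ)+1-k) (k:ℤ) =
        Dz ((n:ℤ)-k) (k:ℤ) + Dz ((n:ℤ)+1-k) ((k:ℤ)-1) + Dz ((n:ℤ)-k) ((k:ℤ)-1) := by
      have t := Dz_rec ((n:ℤ)+1-k) (k:ℤ) (by omega)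
      rw [show (n:ℤ)+1-(k:ℤ)-1 = (n:ℤ)-k from by ring] at t
      exact t
    push_cast
    rw [show (n:ℤ)+1-(k:ℤ)-1 = (n:ℤ)-(k:ℤ) from by ring]
    linear_combination (Dz ((m:ℤ)+k) ((h:ℤ)-k)) * e2
  have hP : (∑ k ∈ range (h+1), (Dz ((n:ℤ)-k) k + Dz ((n:ℤ)-k-1) k) * Dz ((m:ℤ)+1+k) ((h:ℤ)-k-1))
      = ∑ k ∈ range (h+1), (Dz ((n:ℤ)+1-k) ((k:ℤ)-1) + Dz ((n:ℤ)-k) ((k:ℤ)-1)) * Dz ((m:ℤ)+k) ((h:ℤ)-k) := by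
    rw [Finset.sum_range_succ, Finset.sum_range_succ']
    congr 1
    · apply Finset.sum_congr rfl
      intro k _
      push_cast
      rw [show (n:ℤ)+1-((k:ℤ)+1) = (n:ℤ)-k from by ring,
        show (k:ℤ)+1-1 = (k:ℤ) from by ring,
        show (n:ℤ)-((k:ℤ)+1) = (n:ℤ)-k-1 from by ring,
        show (m:ℤ)+((k:ℤ)+1) = (m:ℤ)+1+k from by ring,
        show (h:ℤ)-((k:ℤ)+1) = (h:ℤ)-k-1 from by ring]
    · push_cast
      have z1 : Dz ((m:ℤ)+1+(h:ℤ)) ((h:ℤ)-(h:ℤ)-1) = 0 := Dz_neg_right (by omega)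
      have z2 : Dz ((n:ℤ)+1-0) (-1) = 0 := Dz_neg_right (by norm_num)
      have z3 : Dz ((n:ℤ)-0) (-1) = 0 := Dz_neg_right (by norm_num)
      rw [z1, z2, z3]; ring
  rw [L, R, hP]

lemma S_main (n m h : ℕ) : (D (m + n) h : ℤ) = S m n h := by
  induction n generalizing m with
  | zero => rw [Nat.add_zero, S_zero]
  | succ n ih =>
    rw [show m + (n+1) = (m+1) + n from by ring, ih (m+1), S_shift]

theorem stmt19 (m n h : ℕ) (hh : 0 < h) (hm : h ≤ m) (hn : h ≤ n) :
    (D (m + n) h : ℤ) = ∑ k ∈ range (h + 1),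
      (Dz ((n : ℤ) - k) k * Dz ((m : ℤ) + k) ((h : ℤ) - k) +
        Dz ((n : ℤ) - k - 1) k * Dz ((m : ℤ) + k) ((h : ℤ) - k - 1)) := by
  exact S_main n m h
end
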